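/- Let α_1, ..., α_n ∈ F_{q^m} be F_q-linearly independent. Then for every x ∈ F_q^n, the rank weight of ψ_α(x) = (α_1 x_1, ..., α_n x_n) equals the Hamming weight of x. -/
import Mathlib


theorem rank_weight_psi_eq_hamming
    (Fq Fqm : Type*) [Field Fq] [DecidableEq Fq] [Field Fqm] [Algebra Fq Fqm]
    (n : ℕ) (α : Fin n → Fqm) (hα : LinearIndependent Fq α) (x : Fin n → Fq) :
    Module.finrank Fq
        (Submodule.span Fq (Set.range fun i => α i * algebraMap Fq Fqm (x i))) =
      hammingNorm x := by
  classical
  set f : Fin n → Fqm := fun i => α i * algebraMap Fq Fqm (x i) with hf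
  have hsmul : ∀ i, f i = x i • α i := fun i => by
    simp [hf, Algebra.smul_def, mul_comm]
  set s : Finset (Fin n) := Finset.univ.filter (fun i => x i ≠ 0) with hs
  have hmem : ∀ i : s, x i ≠ 0 := fun i => by
    exact (Finset.mem_filter.mp i.2).2
  have hspan : Submodule.span Fq (Set.range f) = Submodule.span Fq (f '' ↑s) := by
    apply le_antisymm
    · rw [Submodule.span_le]
      rintro _ ⟨i, rfl⟩
      by_cases hx : x i = 0
      · have : f i = 0 := by simp [hsmul i, hx]
        rw [this]; exact Submodule.zero_mem _
      · exact Submodule.subset_span ⟨i, by simp [hs, hx], rfl⟩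
    · exact Submodule.span_mono (Set.image_subset_range _ _)
  have hli : LinearIndependent Fq (fun i : s => f i) := by
    have h1 : LinearIndependent Fq (fun i : s => α i) :=
      hα.comp _ Subtype.val_injective
    have h2 := h1.units_smul (fun i : s => Units.mk0 (x i) (hmem i))
    convert h2 using 1
    funext i
    simp [hsmul i.1, Units.smul_def]
  have himg : f '' ↑s = Set.range (fun i : s => f i) := by
    exact Set.image_eq_range _ _
  rw [hspan, himg, finrank_span_eq_card hli, Fintype.card_coe]
  rfl
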